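/- (Validated saddle-node point, existence part.) For the red coral model there exist a parameter value λ₀ with 0.4212 ≤ λ₀ ≤ 0.4214 (equivalently basic reproduction number R₀ = (b·a)λ₀ with 12.27 ≤ R₀ ≤ 12.29), a fixed point x₀ ∈ ℝ¹³ of f(λ₀, ·) with first component 569.4 ≤ (x₀)₁ ≤ 569.6 and polyp density 853.3 ≤ P(x₀) ≤ 853.5, and a unit vector v ∈ ℝ¹³ such that D_x f(λ₀, x₀)v = v; that is, 1 is an eigenvalue of the Jacobian at this nontrivial fixed point. -/

import Mathlib

set_option maxRecDepth 100000
set_option maxHeartbeats 1000000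


noncomputable section

open Real Finset Matrix

namespace RedCoral

/-- Survival rates `S₁,…,S₁₂` (1-based index; all other indices map to 0). -/
def Sr : ℕ → ℝ
  | 1 => 0.89
  | 2 => 0.63
  | 3 => 0.70
  | 4 => 0.52
  | 5 => 0.44
  | 6 => 0.29
  | 7 => 0.57
  | 8 => 0.33
  | 9 => 0.75
  | 10 => 1
  | 11 => 0.33
  | 12 => 1
  | _ => 0

/-- Fertility rates `F₁,…,F₁₃` (1-based index). -/
def Fert : ℕ → ℝ
  | 3 => 0.36
  | 4 => 0.64
  | 5 => 0.82
  | 6 => 0.97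
  | 7 => 0.98
  | 8 => 0.99
  | 9 => 1
  | 10 => 1
  | 11 => 1
  | 12 => 1
  | 13 => 1
  | _ => 0

/-- Birth rates `b_k = F_k k^{2.324}`. -/
def br (k : ℕ) : ℝ := Fert k * (k : ℝ) ^ (2.324 : ℝ)

/-- Polyps per colony `p_k = 1.239 k^{2.324}`. -/
def pr (k : ℕ) : ℝ := 1.239 * (k : ℝ) ^ (2.324 : ℝ)

def c1 : ℝ := 1.8e5
def c2 : ℝ := 1.3e7
def αr : ℝ := 5e-4
def βr : ℝ := 3.4e-3
def Ωr : ℝ := 36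

/-- Recruit function `φ(y) = c₁ e^{-αy} / (y² + c₂ e^{-βy})`. -/
def φr (y : ℝ) : ℝ := c1 * Real.exp (-αr * y) / (y ^ 2 + c2 * Real.exp (-βr * y))

/-- Polyp density `P(x) = (1/Ω) Σ_{k=2}^{13} p_k x_k` (0-based coordinates:
coordinate `i` is age group `i+1`). -/
def Pd (x : Fin 13 → ℝ) : ℝ :=
  (1 / Ωr) * ∑ i : Fin 13, if i.val = 0 then 0 else pr (i.val + 1) * x i

/-- The red coral model map `f : ℝ × ℝ¹³ → ℝ¹³`:
`f₁(λ,x) = λ φ(P(x)) Σ_k b_k x_k`, `f_{k+1}(λ,x) = S_k x_k`. -/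
def fc (lam : ℝ) (x : Fin 13 → ℝ) : Fin 13 → ℝ := fun i =>
  if _h : i.val = 0 then lam * φr (Pd x) * ∑ j : Fin 13, br (j.val + 1) * x j
  else Sr i.val * x ⟨i.val - 1, by have := i.isLt; omega⟩

/-- Cumulative survival `a₁ = 1`, `a_k = ∏_{i=1}^{k-1} S_i` (here `ar k` is the
1-based `a_{k+1}`, i.e. `ar k = ∏_{j=1}^{k} S_j`, so the 0-based coordinate `i`
carries `a_{i+1} = ar i`). -/
def ar (k : ℕ) : ℝ := ∏ j ∈ Finset.Icc 1 k, Sr j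

/-- `b·a = Σ_{k=1}^{13} a_k b_k`. -/
def ba : ℝ := ∑ i : Fin 13, ar i.val * br (i.val + 1)

/-- `Σ_{k=2}^{13} p_k a_k`. -/
def sumPA : ℝ := ∑ i : Fin 13, if i.val = 0 then 0 else pr (i.val + 1) * ar i.val

/-- The vector `a = (a₁,…,a₁₃)`. -/
def avec : Fin 13 → ℝ := fun i => ar i.val

/-- The Leslie matrix `D_x f(λ,0)`: first row `λ (c₁/c₂) b_j`, subdiagonal
`S₁,…,S₁₂`, all other entries zero. -/
def Jmat (lam : ℝ) : Matrix (Fin 13) (Fin 13) ℝ := Matrix.of fun i j =>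
  if i.val = 0 then lam * (c1 / c2) * br (j.val + 1)
  else if j.val + 1 = i.val then Sr i.val else 0

/-! ### Auxiliary numeric lemmas -/

lemma exp_lb (x lo : ℝ) (hx : |x| ≤ 1)
    (h : lo ≤ (∑ m ∈ Finset.range 12, x ^ m / m.factorial) - x ^ 12 * (13 / 5748019200)) :
    lo ≤ Real.exp x := by
  have hb := Real.exp_bound hx (n := 12) (by norm_num)
  have habs : |x| ^ 12 = x ^ 12 := by rw [← abs_pow, abs_of_nonneg (by positivity)]
  rw [abs_sub_le_iff] at hb
  have h2 := hb.2
  rw [habs] at h2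
  norm_num [Nat.factorial] at h2
  linarith

lemma exp_ub (x hi : ℝ) (hx : |x| ≤ 1)
    (h : (∑ m ∈ Finset.range 12, x ^ m / m.factorial) + x ^ 12 * (13 / 5748019200) ≤ hi) :
    Real.exp x ≤ hi := by
  have hb := Real.exp_bound hx (n := 12) (by norm_num)
  have habs : |x| ^ 12 = x ^ 12 := by rw [← abs_pow, abs_of_nonneg (by positivity)]
  rw [abs_sub_le_iff] at hb
  have h2 := hb.1
  rw [habs] at h2
  norm_num [Nat.factorial] at h2
  linarith

lemma rpow_lb (k : ℕ) (q : ℝ) (hq : 0 ≤ q) (h : q ^ (250:ℕ) ≤ (k:ℝ) ^ (581:ℕ)) :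
    q ≤ (k:ℝ) ^ (2.324:ℝ) := by
  have hk : (0:ℝ) ≤ k := Nat.cast_nonneg k
  have h1 : (k:ℝ) ^ (2.324:ℝ) = ((k:ℝ) ^ (581:ℕ)) ^ ((1:ℝ)/250) := by
    rw [← Real.rpow_natCast (k:ℝ) 581, ← Real.rpow_mul hk]; norm_num
  have h2 : q = (q ^ (250:ℕ)) ^ ((1:ℝ)/250) := by
    rw [← Real.rpow_natCast q 250, ← Real.rpow_mul hq]; norm_num
  rw [h1, h2]
  exact Real.rpow_le_rpow (by positivity) h (by norm_num)

lemma rpow_ub (k : ℕ) (q : ℝ) (hq : 0 ≤ q) (h : (k:ℝ) ^ (581:ℕ) ≤ q ^ (250:ℕ)) :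
    (k:ℝ) ^ (2.324:ℝ) ≤ q := by
  have hk : (0:ℝ) ≤ k := Nat.cast_nonneg k
  have h1 : (k:ℝ) ^ (2.324:ℝ) = ((k:ℝ) ^ (581:ℕ)) ^ ((1:ℝ)/250) := by
    rw [← Real.rpow_natCast (k:ℝ) 581, ← Real.rpow_mul hk]; norm_num
  have h2 : q = (q ^ (250:ℕ)) ^ ((1:ℝ)/250) := by
    rw [← Real.rpow_natCast q 250, ← Real.rpow_mul hq]; norm_num
  rw [h1, h2]
  exact Real.rpow_le_rpow (by positivity) h (by norm_num)

lemma r2_lb : (50071/10000 : ℝ) ≤ (2:ℝ) ^ (2.324:ℝ) := by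
  have := rpow_lb 2 (50071/10000) (by norm_num) (by rw [show (581:ℕ) = 7*83 from rfl, pow_mul, show (250:ℕ) = 10*25 from rfl, pow_mul]; norm_num)
  simpa using this
lemma r2_ub : (2:ℝ) ^ (2.324:ℝ) ≤ (6259/1250 : ℝ) := by
  have := rpow_ub 2 (6259/1250) (by norm_num) (by rw [show (581:ℕ) = 7*83 from rfl, pow_mul, show (250:ℕ) = 10*25 from rfl, pow_mul]; norm_num)
  simpa using this

lemma r3_lb : (64239/5000 : ℝ) ≤ (3:ℝ) ^ (2.324:ℝ) := by
  have := rpow_lb 3 (64239/5000) (by norm_num) (by rw [show (581:ℕ) = 7*83 from rfl, pow_mul, show (250:ℕ) = 10*25 from rfl, pow_mul]; norm_num)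
  simpa using this
lemma r3_ub : (3:ℝ) ^ (2.324:ℝ) ≤ (128479/10000 : ℝ) := by
  have := rpow_ub 3 (128479/10000) (by norm_num) (by rw [show (581:ℕ) = 7*83 from rfl, pow_mul, show (250:ℕ) = 10*25 from rfl, pow_mul]; norm_num)
  simpa using this

lemma r4_lb : (250719/10000 : ℝ) ≤ (4:ℝ) ^ (2.324:ℝ) := by
  have := rpow_lb 4 (250719/10000) (by norm_num) (by rw [show (581:ℕ) = 7*83 from rfl, pow_mul, show (250:ℕ) = 10*25 from rfl, pow_mul]; norm_num)
  simpa using this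
lemma r4_ub : (4:ℝ) ^ (2.324:ℝ) ≤ (3134/125 : ℝ) := by
  have := rpow_ub 4 (3134/125) (by norm_num) (by rw [show (581:ℕ) = 7*83 from rfl, pow_mul, show (250:ℕ) = 10*25 from rfl, pow_mul]; norm_num)
  simpa using this

lemma r5_lb : (5264/125 : ℝ) ≤ (5:ℝ) ^ (2.324:ℝ) := by
  have := rpow_lb 5 (5264/125) (by norm_num) (by rw [show (581:ℕ) = 7*83 from rfl, pow_mul, show (250:ℕ) = 10*25 from rfl, pow_mul]; norm_num)
  simpa using this
lemma r5_ub : (5:ℝ) ^ (2.324:ℝ) ≤ (421121/10000 : ℝ) := by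
  have := rpow_ub 5 (421121/10000) (by norm_num) (by rw [show (581:ℕ) = 7*83 from rfl, pow_mul, show (250:ℕ) = 10*25 from rfl, pow_mul]; norm_num)
  simpa using this

lemma r6_lb : (321657/5000 : ℝ) ≤ (6:ℝ) ^ (2.324:ℝ) := by
  have := rpow_lb 6 (321657/5000) (by norm_num) (by rw [show (581:ℕ) = 7*83 from rfl, pow_mul, show (250:ℕ) = 10*25 from rfl, pow_mul]; norm_num)
  simpa using this
lemma r6_ub : (6:ℝ) ^ (2.324:ℝ) ≤ (128663/2000 : ℝ) := by
  have := rpow_ub 6 (128663/2000) (by norm_num) (by rw [show (581:ℕ) = 7*83 from rfl, pow_mul, show (250:ℕ) = 10*25 from rfl, pow_mul]; norm_num)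
  simpa using this

lemma r7_lb : (460233/5000 : ℝ) ≤ (7:ℝ) ^ (2.324:ℝ) := by
  have := rpow_lb 7 (460233/5000) (by norm_num) (by rw [show (581:ℕ) = 7*83 from rfl, pow_mul, show (250:ℕ) = 10*25 from rfl, pow_mul]; norm_num)
  simpa using this
lemma r7_ub : (7:ℝ) ^ (2.324:ℝ) ≤ (920467/10000 : ℝ) := by
  have := rpow_ub 7 (920467/10000) (by norm_num) (by rw [show (581:ℕ) = 7*83 from rfl, pow_mul, show (250:ℕ) = 10*25 from rfl, pow_mul]; norm_num)
  simpa using this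

lemma r8_lb : (1255397/10000 : ℝ) ≤ (8:ℝ) ^ (2.324:ℝ) := by
  have := rpow_lb 8 (1255397/10000) (by norm_num) (by rw [show (581:ℕ) = 7*83 from rfl, pow_mul, show (250:ℕ) = 10*25 from rfl, pow_mul]; norm_num)
  simpa using this
lemma r8_ub : (8:ℝ) ^ (2.324:ℝ) ≤ (627699/5000 : ℝ) := by
  have := rpow_ub 8 (627699/5000) (by norm_num) (by rw [show (581:ℕ) = 7*83 from rfl, pow_mul, show (250:ℕ) = 10*25 from rfl, pow_mul]; norm_num)
  simpa using this

lemma r9_lb : (1650667/10000 : ℝ) ≤ (9:ℝ) ^ (2.324:ℝ) := by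
  have := rpow_lb 9 (1650667/10000) (by norm_num) (by rw [show (581:ℕ) = 7*83 from rfl, pow_mul, show (250:ℕ) = 10*25 from rfl, pow_mul]; norm_num)
  simpa using this
lemma r9_ub : (9:ℝ) ^ (2.324:ℝ) ≤ (412667/2500 : ℝ) := by
  have := rpow_ub 9 (412667/2500) (by norm_num) (by rw [show (581:ℕ) = 7*83 from rfl, pow_mul, show (250:ℕ) = 10*25 from rfl, pow_mul]; norm_num)
  simpa using this

lemma r10_lb : (527157/2500 : ℝ) ≤ (10:ℝ) ^ (2.324:ℝ) := by
  have := rpow_lb 10 (527157/2500) (by norm_num) (by rw [show (581:ℕ) = 7*83 from rfl, pow_mul, show (250:ℕ) = 10*25 from rfl, pow_mul]; norm_num)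
  simpa using this
lemma r10_ub : (10:ℝ) ^ (2.324:ℝ) ≤ (2108629/10000 : ℝ) := by
  have := rpow_ub 10 (2108629/10000) (by norm_num) (by rw [show (581:ℕ) = 7*83 from rfl, pow_mul, show (250:ℕ) = 10*25 from rfl, pow_mul]; norm_num)
  simpa using this

lemma r11_lb : (1315729/5000 : ℝ) ≤ (11:ℝ) ^ (2.324:ℝ) := by
  have := rpow_lb 11 (1315729/5000) (by norm_num) (by rw [show (581:ℕ) = 7*83 from rfl, pow_mul, show (250:ℕ) = 10*25 from rfl, pow_mul]; norm_num)
  simpa using this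
lemma r11_ub : (11:ℝ) ^ (2.324:ℝ) ≤ (2631459/10000 : ℝ) := by
  have := rpow_ub 11 (2631459/10000) (by norm_num) (by rw [show (581:ℕ) = 7*83 from rfl, pow_mul, show (250:ℕ) = 10*25 from rfl, pow_mul]; norm_num)
  simpa using this

lemma r12_lb : (805299/2500 : ℝ) ≤ (12:ℝ) ^ (2.324:ℝ) := by
  have := rpow_lb 12 (805299/2500) (by norm_num) (by rw [show (581:ℕ) = 7*83 from rfl, pow_mul, show (250:ℕ) = 10*25 from rfl, pow_mul]; norm_num)
  simpa using this
lemma r12_ub : (12:ℝ) ^ (2.324:ℝ) ≤ (3221197/10000 : ℝ) := by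
  have := rpow_ub 12 (3221197/10000) (by norm_num) (by rw [show (581:ℕ) = 7*83 from rfl, pow_mul, show (250:ℕ) = 10*25 from rfl, pow_mul]; norm_num)
  simpa using this

lemma r13_lb : (775951/2000 : ℝ) ≤ (13:ℝ) ^ (2.324:ℝ) := by
  have := rpow_lb 13 (775951/2000) (by norm_num) (by rw [show (581:ℕ) = 7*83 from rfl, pow_mul, show (250:ℕ) = 10*25 from rfl, pow_mul]; norm_num)
  simpa using this
lemma r13_ub : (13:ℝ) ^ (2.324:ℝ) ≤ (969939/2500 : ℝ) := by
  have := rpow_ub 13 (969939/2500) (by norm_num) (by rw [show (581:ℕ) = 7*83 from rfl, pow_mul, show (250:ℕ) = 10*25 from rfl, pow_mul]; norm_num)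
  simpa using this

lemma E1_lb : (0.38014671 : ℝ) ≤ Real.exp (-(483599/500000)) := by
  apply exp_lb _ _ (by rw [abs_of_nonpos] <;> norm_num)
  norm_num [Finset.sum_range_succ, Nat.factorial]
lemma E1_ub : Real.exp (-(483599/500000)) ≤ (0.38014672 : ℝ) := by
  apply exp_ub _ _ (by rw [abs_of_nonpos] <;> norm_num)
  norm_num [Finset.sum_range_succ, Nat.factorial]

lemma E2_lb : (0.38013809 : ℝ) ≤ Real.exp (-(1450831/1500000)) := by
  apply exp_lb _ _ (by rw [abs_of_nonpos] <;> norm_num)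
  norm_num [Finset.sum_range_succ, Nat.factorial]
lemma E2_ub : Real.exp (-(1450831/1500000)) ≤ (0.38013811 : ℝ) := by
  apply exp_ub _ _ (by rw [abs_of_nonpos] <;> norm_num)
  norm_num [Finset.sum_range_succ, Nat.factorial]

lemma A1_lb : (0.65265605 : ℝ) ≤ Real.exp (-(85341/200000)) := by
  apply exp_lb _ _ (by rw [abs_of_nonpos] <;> norm_num)
  norm_num [Finset.sum_range_succ, Nat.factorial]
lemma A1_ub : Real.exp (-(85341/200000)) ≤ (0.65265606 : ℝ) := by
  apply exp_ub _ _ (by rw [abs_of_nonpos] <;> norm_num)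
  norm_num [Finset.sum_range_succ, Nat.factorial]

lemma A2_lb : (0.65264953 : ℝ) ≤ Real.exp (-(85343/200000)) := by
  apply exp_lb _ _ (by rw [abs_of_nonpos] <;> norm_num)
  norm_num [Finset.sum_range_succ, Nat.factorial]
lemma A2_ub : Real.exp (-(85343/200000)) ≤ (0.65264954 : ℝ) := by
  apply exp_ub _ _ (by rw [abs_of_nonpos] <;> norm_num)
  norm_num [Finset.sum_range_succ, Nat.factorial]
lemma ar_zero : ar 0 = 1 := by simp [ar]

lemma ar_succ (k : ℕ) : ar (k+1) = ar k * Sr (k+1) :=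
  Finset.prod_Icc_succ_top (Nat.succ_le_succ (Nat.zero_le k)) Sr

lemma ba_eq : ba = (0.36*0.5607) * (3:ℝ)^(2.324:ℝ) + (0.64*0.392490) * (4:ℝ)^(2.324:ℝ)
    + (0.82*0.20409480) * (5:ℝ)^(2.324:ℝ) + (0.97*0.0898017120) * (6:ℝ)^(2.324:ℝ)
    + (0.98*0.026042496480) * (7:ℝ)^(2.324:ℝ) + (0.99*0.01484422299360) * (8:ℝ)^(2.324:ℝ)
    + 0.0048985935878880 * (9:ℝ)^(2.324:ℝ) + 0.003673945190916 * (10:ℝ)^(2.324:ℝ)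
    + 0.003673945190916 * (11:ℝ)^(2.324:ℝ) + 0.00121240191300228 * (12:ℝ)^(2.324:ℝ)
    + 0.00121240191300228 * (13:ℝ)^(2.324:ℝ) := by
  simp [ba, Fin.sum_univ_succ, br, ar_succ, ar_zero]
  norm_num [Fert, Sr]
  ring

lemma sumPA_eq : sumPA = (1.239*0.89) * (2:ℝ)^(2.324:ℝ) + (1.239*0.5607) * (3:ℝ)^(2.324:ℝ)
    + (1.239*0.392490) * (4:ℝ)^(2.324:ℝ) + (1.239*0.20409480) * (5:ℝ)^(2.324:ℝ)
    + (1.239*0.0898017120) * (6:ℝ)^(2.324:ℝ) + (1.239*0.026042496480) * (7:ℝ)^(2.324:ℝ)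
    + (1.239*0.01484422299360) * (8:ℝ)^(2.324:ℝ) + (1.239*0.0048985935878880) * (9:ℝ)^(2.324:ℝ)
    + (1.239*0.003673945190916) * (10:ℝ)^(2.324:ℝ) + (1.239*0.003673945190916) * (11:ℝ)^(2.324:ℝ)
    + (1.239*0.00121240191300228) * (12:ℝ)^(2.324:ℝ)
    + (1.239*0.00121240191300228) * (13:ℝ)^(2.324:ℝ) := by
  simp [sumPA, Fin.sum_univ_succ, pr, ar_succ, ar_zero]
  norm_num [Sr]
  ring

lemma phi_hasDerivAt_zero (y : ℝ) (hy0 : (βr - αr) * c2 * Real.exp (-βr * y) - 2*y - αr * y^2 = 0) :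
    HasDerivAt φr 0 y := by
  have hden : (0:ℝ) < y^2 + c2 * Real.exp (-βr * y) := by
    have := Real.exp_pos (-βr * y); unfold c2; positivity
  have h1 : HasDerivAt (fun z : ℝ => -αr * z) (-αr) y := by
    simpa using (hasDerivAt_id y).const_mul (-αr)
  have h2 : HasDerivAt (fun z : ℝ => c1 * Real.exp (-αr * z))
      (c1 * (Real.exp (-αr * y) * -αr)) y := h1.exp.const_mul c1
  have h3 : HasDerivAt (fun z : ℝ => -βr * z) (-βr) y := by
    simpa using (hasDerivAt_id y).const_mul (-βr)
  have hp : HasDerivAt (fun z : ℝ => z^2) (2*y) y := by simpa using hasDerivAt_pow 2 y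
  have h4 : HasDerivAt (fun z : ℝ => z^2 + c2 * Real.exp (-βr * z))
      (2*y + c2 * (Real.exp (-βr * y) * -βr)) y := hp.add (h3.exp.const_mul c2)
  have h5 := h2.div h4 (ne_of_gt hden)
  have key : c1 * (Real.exp (-αr*y) * -αr) * (y^2 + c2*Real.exp (-βr*y))
      - c1 * Real.exp (-αr*y) * (2*y + c2*(Real.exp (-βr*y) * -βr)) = 0 := by
    have hr : c1 * (Real.exp (-αr*y) * -αr) * (y^2 + c2*Real.exp (-βr*y))
        - c1 * Real.exp (-αr*y) * (2*y + c2*(Real.exp (-βr*y) * -βr))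
        = c1 * Real.exp (-αr*y) * ((βr - αr) * c2 * Real.exp (-βr*y) - 2*y - αr * y^2) := by
      ring
    rw [hr, hy0, mul_zero]
  have hfinal : HasDerivAt (fun z : ℝ => c1 * Real.exp (-αr * z) / (z^2 + c2 * Real.exp (-βr * z))) 0 y := by
    exact h5.congr_deriv (by rw [key, zero_div])
  exact hfinal

/-- validated saddle-node point, existence part: there are a
parameter `λ₀ ∈ [0.4212, 0.4214]` (equivalently `R₀ = (b·a)λ₀ ∈ [12.27, 12.29]`),
a fixed point `x₀` of `f(λ₀,·)` with first component in `[569.4, 569.6]` and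
polyp density in `[853.3, 853.5]`, and a Euclidean unit vector `v ∈ ℝ¹³` with
`D_x f(λ₀,x₀) v = v`, i.e. `1` is an eigenvalue of the Jacobian at this
nontrivial fixed point. -/
theorem red_coral_saddle_node :
    ∃ (lam : ℝ) (x₀ v : Fin 13 → ℝ),
      0.4212 ≤ lam ∧ lam ≤ 0.4214 ∧
      12.27 ≤ ba * lam ∧ ba * lam ≤ 12.29 ∧
      fc lam x₀ = x₀ ∧
      569.4 ≤ x₀ 0 ∧ x₀ 0 ≤ 569.6 ∧
      853.3 ≤ Pd x₀ ∧ Pd x₀ ≤ 853.5 ∧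
      Real.sqrt (∑ i : Fin 13, v i ^ 2) = 1 ∧
      fderiv ℝ (fc lam) x₀ v = v := by
  -- Step 1: find the critical point y of φ by the intermediate value theorem
  have hfc : Continuous (fun y : ℝ => (βr - αr) * c2 * Real.exp (-βr * y) - 2*y - αr * y^2) := by
    fun_prop
  obtain ⟨y, hyI, hy0⟩ : ∃ y ∈ Set.Icc (853.41:ℝ) (853.43:ℝ),
      (βr - αr) * c2 * Real.exp (-βr * y) - 2*y - αr * y^2 = 0 := by
    have hsub := intermediate_value_Icc' (by norm_num : (853.41:ℝ) ≤ 853.43) hfc.continuousOn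
    have e1 : Real.exp (-βr * 853.41) = Real.exp (-(483599/500000)) ^ (3:ℕ) := by
      rw [← Real.exp_nat_mul]
      congr 1
      norm_num [βr]
    have e2 : Real.exp (-βr * 853.43) = Real.exp (-(1450831/1500000)) ^ (3:ℕ) := by
      rw [← Real.exp_nat_mul]
      congr 1
      norm_num [βr]
    have hmem : (0:ℝ) ∈ Set.Icc
        ((fun y : ℝ => (βr - αr) * c2 * Real.exp (-βr * y) - 2*y - αr * y^2) 853.43)
        ((fun y : ℝ => (βr - αr) * c2 * Real.exp (-βr * y) - 2*y - αr * y^2) 853.41) := by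
      constructor
      · show (βr - αr) * c2 * Real.exp (-βr * 853.43) - 2*853.43 - αr * 853.43^2 ≤ 0
        rw [e2]
        have h3 : Real.exp (-(1450831/1500000)) ^ (3:ℕ) ≤ (0.38013811:ℝ) ^ (3:ℕ) :=
          pow_le_pow_left₀ (le_of_lt (Real.exp_pos _)) E2_ub 3
        simp only [βr, αr, c2]
        nlinarith [h3]
      · show (0:ℝ) ≤ (βr - αr) * c2 * Real.exp (-βr * 853.41) - 2*853.41 - αr * 853.41^2
        rw [e1]
        have h3 : (0.38014671:ℝ) ^ (3:ℕ) ≤ Real.exp (-(483599/500000)) ^ (3:ℕ) :=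
          pow_le_pow_left₀ (by norm_num) E1_lb 3
        simp only [βr, αr, c2]
        nlinarith [h3]
    obtain ⟨y, hyI, hy⟩ := hsub hmem
    exact ⟨y, hyI, hy⟩
  obtain ⟨hy1, hy2⟩ := hyI
  -- Step 2: bounds for the exponentials at y
  have hEβub : Real.exp (-βr * y) ≤ (0.38014672:ℝ)^(3:ℕ) := by
    have e1 : Real.exp (-βr * 853.41) = Real.exp (-(483599/500000)) ^ (3:ℕ) := by
      rw [← Real.exp_nat_mul]
      congr 1
      norm_num [βr]
    have hmono : Real.exp (-βr * y) ≤ Real.exp (-βr * 853.41) := by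
      apply Real.exp_le_exp.2
      simp only [βr]
      nlinarith
    exact le_trans hmono (e1 ▸ pow_le_pow_left₀ (le_of_lt (Real.exp_pos _)) E1_ub 3)
  have hEβlb : (0.38013809:ℝ)^(3:ℕ) ≤ Real.exp (-βr * y) := by
    have e2 : Real.exp (-βr * 853.43) = Real.exp (-(1450831/1500000)) ^ (3:ℕ) := by
      rw [← Real.exp_nat_mul]
      congr 1
      norm_num [βr]
    have hmono : Real.exp (-βr * 853.43) ≤ Real.exp (-βr * y) := by
      apply Real.exp_le_exp.2
      simp only [βr]
      nlinarith
    refine le_trans ?_ hmono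
    rw [e2]
    exact pow_le_pow_left₀ (by norm_num) E2_lb 3
  have hAub : Real.exp (-αr * y) ≤ (0.65265606:ℝ) := by
    have hmono : Real.exp (-αr * y) ≤ Real.exp (-(85341/200000)) := by
      apply Real.exp_le_exp.2
      simp only [αr]
      nlinarith
    exact le_trans hmono A1_ub
  have hAlb : (0.65264953:ℝ) ≤ Real.exp (-αr * y) := by
    have hmono : Real.exp (-(85343/200000)) ≤ Real.exp (-αr * y) := by
      apply Real.exp_le_exp.2
      simp only [αr]
      nlinarith
    exact le_trans A2_lb hmono
  -- Step 3: bounds for φr y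
  have hexp_pos := Real.exp_pos (-βr * y)
  have hden_pos : (0:ℝ) < y^2 + c2 * Real.exp (-βr * y) := by
    unfold c2; positivity
  have hφub : φr y ≤ (0.081445:ℝ) := by
    unfold φr
    rw [div_le_iff₀ hden_pos]
    simp only [c1, c2]
    nlinarith [hAub, hEβlb, hy1, hy2]
  have hφlb : (0.081439:ℝ) ≤ φr y := by
    unfold φr
    rw [le_div_iff₀ hden_pos]
    simp only [c1, c2]
    nlinarith [hAlb, hEβub, hy1, hy2, Real.exp_pos (-αr * y)]
  have hφ_pos : (0:ℝ) < φr y := lt_of_lt_of_le (by norm_num) hφlb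
  -- Step 4: bounds for ba and sumPA
  have hba_lb : (29.1478:ℝ) ≤ ba := by
    rw [ba_eq]
    linarith [r3_lb, r4_lb, r5_lb, r6_lb, r7_lb, r8_lb, r9_lb, r10_lb, r11_lb, r12_lb, r13_lb]
  have hba_ub : ba ≤ (29.148:ℝ) := by
    rw [ba_eq]
    linarith [r3_ub, r4_ub, r5_ub, r6_ub, r7_ub, r8_ub, r9_ub, r10_ub, r11_ub, r12_ub, r13_ub]
  have hsum_lb : (53.951:ℝ) ≤ sumPA := by
    rw [sumPA_eq]
    linarith [r2_lb, r3_lb, r4_lb, r5_lb, r6_lb, r7_lb, r8_lb, r9_lb, r10_lb, r11_lb, r12_lb, r13_lb]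
  have hsum_ub : sumPA ≤ (53.9515:ℝ) := by
    rw [sumPA_eq]
    linarith [r2_ub, r3_ub, r4_ub, r5_ub, r6_ub, r7_ub, r8_ub, r9_ub, r10_ub, r11_ub, r12_ub, r13_ub]
  have hba_pos : (0:ℝ) < ba := by linarith
  have hsum_pos : (0:ℝ) < sumPA := by linarith
  -- Step 5: the data
  set lam : ℝ := (ba * φr y)⁻¹ with hlam
  have hbaφ_pos : (0:ℝ) < ba * φr y := mul_pos hba_pos hφ_pos
  have hlam_mul : lam * (ba * φr y) = 1 := inv_mul_cancel₀ (ne_of_gt hbaφ_pos)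
  set t : ℝ := Ωr * y / sumPA with ht
  set x₀ : Fin 13 → ℝ := fun i => t * ar i.val with hx₀def
  have hBsum : ∀ s : ℝ, ∑ j : Fin 13, br (j.val+1) * (s * ar j.val) = s * ba := by
    intro s
    rw [ba, Finset.mul_sum]
    exact Finset.sum_congr rfl fun j _ => by ring
  have hPsum : ∑ i : Fin 13, (if i.val = 0 then 0 else pr (i.val+1) * (t * ar i.val)) = t * sumPA := by
    rw [sumPA, Finset.mul_sum]
    refine Finset.sum_congr rfl fun i _ => ?_
    by_cases h : i.val = 0
    · simp [h]
    · simp only [if_neg h]; ring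
  have hPd : Pd x₀ = y := by
    rw [Pd]
    simp only [hx₀def]
    rw [hPsum, ht]
    have hΩ : Ωr = (36:ℝ) := by norm_num [Ωr]
    rw [hΩ]
    field_simp
  have hB : ∑ j : Fin 13, br (j.val+1) * x₀ j = t * ba := by
    simp only [hx₀def]; exact hBsum t
  -- Step 6: fixed point
  have hfix : fc lam x₀ = x₀ := by
    funext i
    by_cases h : i.val = 0
    · show (if _h : i.val = 0 then lam * φr (Pd x₀) * ∑ j : Fin 13, br (j.val + 1) * x₀ j
        else Sr i.val * x₀ ⟨i.val - 1, by have := i.isLt; omega⟩) = x₀ i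
      rw [dif_pos h, hPd, hB]
      have hxi : x₀ i = t := by
        simp only [hx₀def, h, ar_zero, mul_one]
      rw [hxi]
      calc lam * φr y * (t * ba) = (lam * (ba * φr y)) * t := by ring
        _ = t := by rw [hlam_mul, one_mul]
    · show (if _h : i.val = 0 then lam * φr (Pd x₀) * ∑ j : Fin 13, br (j.val + 1) * x₀ j
        else Sr i.val * x₀ ⟨i.val - 1, by have := i.isLt; omega⟩) = x₀ i
      rw [dif_neg h]
      simp only [hx₀def]
      show Sr i.val * (t * ar (i.val - 1)) = t * ar i.val
      have hk : i.val - 1 + 1 = i.val := by omega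
      conv_rhs => rw [← hk, ar_succ]
      rw [hk]; ring
  -- Step 7: unit vector
  set S : ℝ := ∑ i : Fin 13, (ar i.val)^2 with hS
  have hS1 : (1:ℝ) ≤ S := by
    have h0 : (ar (0:Fin 13).val)^2 ≤ S :=
      Finset.single_le_sum (f := fun i : Fin 13 => (ar i.val)^2)
        (fun i _ => sq_nonneg _) (Finset.mem_univ (0 : Fin 13))
    have : (ar (0:Fin 13).val)^2 = 1 := by
      norm_num [ar_zero]
    linarith
  have hS_pos : (0:ℝ) < S := lt_of_lt_of_le one_pos hS1
  set c : ℝ := (Real.sqrt S)⁻¹ with hc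
  set v : Fin 13 → ℝ := fun i => c * ar i.val with hv
  refine ⟨lam, x₀, v, ?_, ?_, ?_, ?_, hfix, ?_, ?_, ?_, ?_, ?_, ?_⟩
  · -- 0.4212 ≤ lam
    rw [hlam, ← one_div, le_div_iff₀ hbaφ_pos]
    nlinarith [hba_ub, hφub, hba_pos, hφ_pos]
  · -- lam ≤ 0.4214
    rw [hlam, ← one_div, div_le_iff₀ hbaφ_pos]
    nlinarith [hba_lb, hφlb]
  · -- 12.27 ≤ ba * lam
    have hbalam : ba * lam = (φr y)⁻¹ := by
      rw [hlam, mul_inv, ← mul_assoc, mul_inv_cancel₀ (ne_of_gt hba_pos), one_mul]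
    rw [hbalam, ← one_div, le_div_iff₀ hφ_pos]
    nlinarith [hφub]
  · -- ba * lam ≤ 12.29
    have hbalam : ba * lam = (φr y)⁻¹ := by
      rw [hlam, mul_inv, ← mul_assoc, mul_inv_cancel₀ (ne_of_gt hba_pos), one_mul]
    rw [hbalam, ← one_div, div_le_iff₀ hφ_pos]
    nlinarith [hφlb]
  · -- 569.4 ≤ x₀ 0
    have hx00 : x₀ 0 = t := by simp only [hx₀def]; norm_num [ar_zero]
    rw [hx00, ht]
    have hΩ : Ωr = (36:ℝ) := by norm_num [Ωr]
    rw [hΩ, le_div_iff₀ hsum_pos]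
    nlinarith [hy1, hsum_ub]
  · -- x₀ 0 ≤ 569.6
    have hx00 : x₀ 0 = t := by simp only [hx₀def]; norm_num [ar_zero]
    rw [hx00, ht]
    have hΩ : Ωr = (36:ℝ) := by norm_num [Ωr]
    rw [hΩ, div_le_iff₀ hsum_pos]
    nlinarith [hy2, hsum_lb]
  · -- 853.3 ≤ Pd x₀
    rw [hPd]; linarith
  · -- Pd x₀ ≤ 853.5
    rw [hPd]; linarith
  · -- unit vector
    have hsum1 : ∑ i : Fin 13, v i ^ 2 = 1 := by
      have hterm : ∀ i : Fin 13, v i ^ 2 = c^2 * (ar i.val)^2 := by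
        intro i; simp only [hv]; ring
      rw [Finset.sum_congr rfl fun i _ => hterm i, ← Finset.mul_sum, ← hS, hc,
        inv_pow, Real.sq_sqrt (le_of_lt hS_pos), inv_mul_cancel₀ (ne_of_gt hS_pos)]
    rw [hsum1, Real.sqrt_one]
  · -- eigenvector
    set LB : (Fin 13 → ℝ) →L[ℝ] ℝ :=
      ∑ j : Fin 13, br (j.val+1) • ContinuousLinearMap.proj j with hLBdef
    have hLBapp : ∀ x : Fin 13 → ℝ, LB x = ∑ j : Fin 13, br (j.val+1) * x j := by
      intro x
      rw [hLBdef]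
      simp [ContinuousLinearMap.sum_apply]
    set LP : (Fin 13 → ℝ) →L[ℝ] ℝ :=
      ∑ j : Fin 13, (if j.val = 0 then 0 else pr (j.val+1) * (1/Ωr)) • ContinuousLinearMap.proj j
      with hLPdef
    have hLPapp : ∀ x : Fin 13 → ℝ, LP x = Pd x := by
      intro x
      rw [hLPdef, Pd]
      simp only [ContinuousLinearMap.sum_apply, ContinuousLinearMap.smul_apply,
        ContinuousLinearMap.proj_apply, smul_eq_mul]
      rw [Finset.mul_sum]
      refine Finset.sum_congr rfl fun j _ => ?_
      by_cases h : j.val = 0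
      · simp [h]
      · simp only [if_neg h]; ring
    have hPdF : HasFDerivAt Pd LP x₀ := by
      have heq : Pd = ⇑LP := funext fun x => (hLPapp x).symm
      rw [heq]
      exact LP.hasFDerivAt
    have hBF : HasFDerivAt (fun x : Fin 13 → ℝ => ∑ j : Fin 13, br (j.val+1) * x j) LB x₀ := by
      have heq : (fun x : Fin 13 → ℝ => ∑ j : Fin 13, br (j.val+1) * x j) = ⇑LB :=
        funext fun x => (hLBapp x).symm
      rw [heq]
      exact LB.hasFDerivAt
    have hφd : HasDerivAt φr 0 (Pd x₀) := by
      rw [hPd]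
      exact phi_hasDerivAt_zero y hy0
    have hφF : HasFDerivAt (fun x : Fin 13 → ℝ => φr (Pd x)) ((0:ℝ) • LP) x₀ :=
      hφd.comp_hasFDerivAt x₀ hPdF
    have hcomp0 : HasFDerivAt
        (fun x : Fin 13 → ℝ => lam * (φr (Pd x) * ∑ j : Fin 13, br (j.val+1) * x j))
        (lam • (φr (Pd x₀) • LB + (∑ j : Fin 13, br (j.val+1) * x₀ j) • ((0:ℝ) • LP))) x₀ :=
      (hφF.mul hBF).const_mul lam
    have hasF : HasFDerivAt (fc lam) (ContinuousLinearMap.pi (fun i : Fin 13 =>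
        if i.val = 0 then
          (lam • (φr (Pd x₀) • LB + (∑ j : Fin 13, br (j.val+1) * x₀ j) • ((0:ℝ) • LP)))
        else (Sr i.val) • ContinuousLinearMap.proj
          (⟨i.val - 1, by have := i.isLt; omega⟩ : Fin 13))) x₀ := by
      refine hasFDerivAt_pi'.2 fun i => ?_
      rw [ContinuousLinearMap.proj_pi]
      by_cases h : i.val = 0
      · have hfe : (fun x : Fin 13 → ℝ => fc lam x i)
            = (fun x : Fin 13 → ℝ => lam * (φr (Pd x) * ∑ j : Fin 13, br (j.val+1) * x j)) := by
          funext x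
          show (if _h : i.val = 0 then lam * φr (Pd x) * ∑ j : Fin 13, br (j.val + 1) * x j
            else Sr i.val * x ⟨i.val - 1, by have := i.isLt; omega⟩)
            = lam * (φr (Pd x) * ∑ j : Fin 13, br (j.val+1) * x j)
          rw [dif_pos h]; ring
        rw [hfe, if_pos h]
        exact hcomp0
      · have hfe : (fun x : Fin 13 → ℝ => fc lam x i)
            = (fun x : Fin 13 → ℝ => Sr i.val * x (⟨i.val - 1, by have := i.isLt; omega⟩ : Fin 13)) := by
          funext x
          show (if _h : i.val = 0 then lam * φr (Pd x) * ∑ j : Fin 13, br (j.val + 1) * x j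
            else Sr i.val * x ⟨i.val - 1, by have := i.isLt; omega⟩)
            = Sr i.val * x ⟨i.val - 1, by have := i.isLt; omega⟩
          rw [dif_neg h]
        rw [hfe, if_neg h]
        exact (hasFDerivAt_apply (⟨i.val - 1, by have := i.isLt; omega⟩ : Fin 13) x₀).const_mul
          (Sr i.val)
    rw [hasF.fderiv]
    funext i
    rw [ContinuousLinearMap.pi_apply]
    by_cases h : i.val = 0
    · rw [if_pos h]
      simp only [ContinuousLinearMap.smul_apply, ContinuousLinearMap.add_apply, smul_eq_mul]
      rw [hPd]
      have hLBv : LB v = c * ba := by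
        rw [hLBapp]
        simp only [hv]
        exact hBsum c
      rw [hLBv]
      have hvi : v i = c := by
        simp only [hv, h, ar_zero, mul_one]
      rw [hvi]
      calc lam * (φr y * (c * ba) + (∑ j : Fin 13, br (j.val+1) * x₀ j) * (0 * LP v))
          = (lam * (ba * φr y)) * c := by ring
        _ = c := by rw [hlam_mul, one_mul]
    · rw [if_neg h]
      simp only [ContinuousLinearMap.smul_apply, ContinuousLinearMap.proj_apply, smul_eq_mul]
      simp only [hv]
      show Sr i.val * (c * ar (i.val - 1)) = c * ar i.val
      have hk : i.val - 1 + 1 = i.val := by omega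
      conv_rhs => rw [← hk, ar_succ]
      rw [hk]; ring

end RedCoral
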